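/- Let X₁, X₂ and Z be mutually independent real random variables, where X₁ is exponentially distributed with mean λ₁ > 0, X₂ is exponentially distributed with mean λ₂ > 0, and Z is nonnegative. Let A, B, η, u > 0. Then lim_{ρ → ∞} ℙ( A·ρ·X₂ < u·(B·ρ·X₁ + η·ρ·Z + 1) ) = 1 − ( A·λ₂/(A·λ₂ + B·u·λ₁) )·𝔼[ exp( −η·u·Z/(A·λ₂) ) ], and this limit is strictly positive. -/

import Mathlib

open MeasureTheory ProbabilityTheory Real Filter

/-- A real random variable `X` is exponentially distributed with mean `lam > 0` if its law has
density `(1/lam) * exp (-x/lam)` on `[0, ∞)` and `0` on `(-∞, 0)`. -/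
def HasExpLaw {Ω : Type*} [MeasurableSpace Ω] (P : Measure Ω) (X : Ω → ℝ) (lam : ℝ) : Prop :=
  Measurable X ∧
    P.map X = MeasureTheory.volume.withDensity
      (fun x => ENNReal.ofReal (if 0 ≤ x then (1 / lam) * Real.exp (-x / lam) else 0))

set_option maxHeartbeats 1000000

section helpers
open Set
variable {Ω : Type*} [MeasurableSpace Ω] {P : Measure Ω} [IsProbabilityMeasure P]

lemma expLaw_map_eq {X : Ω → ℝ} {lam : ℝ} (h : HasExpLaw P X lam) :
    P.map X = MeasureTheory.volume.withDensity (exponentialPDF (1/lam)) := by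
  rw [h.2]
  congr 1
  funext x
  rw [exponentialPDF_eq]
  congr 1
  split_ifs with hx
  · rw [show -x/lam = -(1/lam*x) by ring]
  · rfl

lemma expLaw_map_Iio {X : Ω → ℝ} {lam : ℝ} (hlam : 0 < lam) (h : HasExpLaw P X lam) (y : ℝ) :
    P.map X (Iio y) = ENNReal.ofReal (1 - Real.exp (-(y/lam))) := by
  rw [expLaw_map_eq h, withDensity_apply _ measurableSet_Iio]
  rcases le_or_gt 0 y with hy | hy
  · rw [setLIntegral_congr Iio_ae_eq_Iic,
      lintegral_exponentialPDF_eq_antiDeriv (by positivity) y, if_pos hy]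
    congr 2
    ring
  · rw [lintegral_exponentialPDF_of_nonpos hy.le]
    symm
    rw [ENNReal.ofReal_eq_zero]
    have h1 : (1:ℝ) ≤ Real.exp (-(y/lam)) := by
      apply Real.one_le_exp
      have : y / lam < 0 := div_neg_of_neg_of_pos hy hlam
      linarith
    linarith

lemma expLaw_ae_nonneg {X : Ω → ℝ} {lam : ℝ} (hlam : 0 < lam) (h : HasExpLaw P X lam) :
    ∀ᵐ ω ∂P, 0 ≤ X ω := by
  rw [ae_iff]
  have : {ω | ¬ 0 ≤ X ω} = X ⁻¹' Iio 0 := by ext ω; simp [not_le]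
  rw [this, ← Measure.map_apply h.1 measurableSet_Iio, expLaw_map_Iio hlam h]
  simp

lemma integrable_exp_nonpos {g : Ω → ℝ} (hg : Measurable g) (hgle : ∀ᵐ ω ∂P, g ω ≤ 0) :
    Integrable (fun ω => Real.exp (g ω)) P := by
  apply Integrable.mono' (integrable_const 1) (hg.exp.aestronglyMeasurable)
  filter_upwards [hgle] with ω hω
  rw [Real.norm_eq_abs, abs_of_pos (Real.exp_pos _)]
  exact Real.exp_le_one_iff.mpr hω

lemma expLaw_integral_exp_neg {X : Ω → ℝ} {lam s : ℝ} (hlam : 0 < lam) (hs : 0 < s)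
    (h : HasExpLaw P X lam) :
    ∫ ω, Real.exp (-(s * X ω)) ∂P = 1 / (1 + s * lam) := by
  set r : ℝ := 1/lam with hr
  have hrpos : 0 < r := by positivity
  have hcont : Continuous fun x : ℝ => Real.exp (-(s * x)) := by continuity
  have hmap : ∫ ω, Real.exp (-(s * X ω)) ∂P = ∫ x, Real.exp (-(s * x)) ∂(P.map X) := by
    rw [integral_map h.1.aemeasurable hcont.aestronglyMeasurable]
  rw [hmap, expLaw_map_eq h, ← hr]
  have hmeasPDF : Measurable (exponentialPDF r) := by
    unfold exponentialPDF
    exact (measurable_exponentialPDFReal r).ennreal_ofReal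
  have key : ∫⁻ x, ENNReal.ofReal (Real.exp (-(s * x))) ∂(volume.withDensity (exponentialPDF r))
      = ENNReal.ofReal (r/(r+s)) := by
    have hgm : Measurable (fun x : ℝ => ENNReal.ofReal (Real.exp (-(s * x)))) :=
      hcont.measurable.ennreal_ofReal
    rw [lintegral_withDensity_eq_lintegral_mul _ hmeasPDF hgm]
    have hpt : ∀ x : ℝ, (exponentialPDF r * fun x => ENNReal.ofReal (Real.exp (-(s * x)))) x
        = ENNReal.ofReal (r/(r+s)) * exponentialPDF (r+s) x := by
      intro x
      simp only [Pi.mul_apply, exponentialPDF_eq]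
      split_ifs with hx
      · rw [← ENNReal.ofReal_mul (by positivity), ← ENNReal.ofReal_mul (by positivity)]
        congr 1
        rw [mul_assoc, ← Real.exp_add, show -(r*x) + -(s*x) = -((r+s)*x) by ring]
        have hrs : r + s ≠ 0 := by positivity
        field_simp
      · simp
    have hm2 : Measurable (exponentialPDF (r+s)) := by
      unfold exponentialPDF
      exact (measurable_exponentialPDFReal (r+s)).ennreal_ofReal
    rw [lintegral_congr hpt, lintegral_const_mul _ hm2,
      lintegral_exponentialPDF_eq_one (by positivity), mul_one]
  rw [integral_eq_lintegral_of_nonneg_ae (ae_of_all _ fun x => (Real.exp_pos _).le)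
    hcont.aestronglyMeasurable, key, ENNReal.toReal_ofReal (by positivity)]
  rw [hr]
  rw [div_eq_div_iff (by positivity) (by positivity)]
  field_simp

end helpers

theorem stmt_17 {Ω : Type*} [MeasurableSpace Ω] (P : Measure Ω) [IsProbabilityMeasure P]
    (lam₁ lam₂ A B η u : ℝ)
    (hlam₁ : 0 < lam₁) (hlam₂ : 0 < lam₂) (hA : 0 < A) (hB : 0 < B)
    (hη : 0 < η) (hu : 0 < u)
    (X₁ X₂ Z : Ω → ℝ)
    (hX₁ : HasExpLaw P X₁ lam₁) (hX₂ : HasExpLaw P X₂ lam₂)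
    (hZmeas : Measurable Z) (hZnonneg : ∀ ω, 0 ≤ Z ω)
    (hindep : iIndepFun ![X₁, X₂, Z] P) :
    Tendsto
      (fun ρ : ℝ =>
        (P {ω | A * ρ * X₂ ω < u * (B * ρ * X₁ ω + η * ρ * Z ω + 1)}).toReal)
      atTop
      (nhds (1 - (A * lam₂ / (A * lam₂ + B * u * lam₁)) *
        ∫ ω, Real.exp (-(η * u * Z ω) / (A * lam₂)) ∂P)) ∧
    0 < 1 - (A * lam₂ / (A * lam₂ + B * u * lam₁)) *
        ∫ ω, Real.exp (-(η * u * Z ω) / (A * lam₂)) ∂P := by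
  have hX₁m : Measurable X₁ := hX₁.1
  have hX₂m : Measurable X₂ := hX₂.1
  set q : ℝ := A * lam₂ / (A * lam₂ + B * u * lam₁) with hq
  set I : ℝ := ∫ ω, Real.exp (-(η * u * Z ω) / (A * lam₂)) ∂P with hI
  have hInn : 0 ≤ I := integral_nonneg fun ω => (Real.exp_pos _).le
  have hIint : Integrable (fun ω => Real.exp (-(η * u * Z ω) / (A * lam₂))) P := by
    apply integrable_exp_nonpos ((hZmeas.const_mul (η * u)).neg.div_const (A * lam₂))
    apply ae_of_all
    intro ω
    have := hZnonneg ω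
    have h1 : 0 ≤ η * u * Z ω := by positivity
    apply div_nonpos_of_nonpos_of_nonneg (by show -(η * u * Z ω) ≤ 0; linarith) (by positivity)
  have hIle : I ≤ 1 := by
    rw [hI]
    calc ∫ ω, Real.exp (-(η * u * Z ω) / (A * lam₂)) ∂P ≤ ∫ _, (1:ℝ) ∂P := by
          apply integral_mono hIint (integrable_const 1)
          intro ω
          apply Real.exp_le_one_iff.mpr
          have := hZnonneg ω
          have h1 : 0 ≤ η * u * Z ω := by positivity
          exact div_nonpos_of_nonpos_of_nonneg (by linarith) (by positivity)
      _ = 1 := by simp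
  have hq1 : q < 1 := by
    rw [hq, div_lt_one (by positivity)]
    have : 0 < B * u * lam₁ := by positivity
    linarith
  have hqnn : 0 ≤ q := by positivity
  have hmeas3 : ∀ i : Fin 3, Measurable (![X₁, X₂, Z] i) := by
    intro i
    fin_cases i
    · exact hX₁m
    · exact hX₂m
    · exact hZmeas
  have hprod : IndepFun (fun ω => (X₁ ω, Z ω)) X₂ P := by
    have := hindep.indepFun_prodMk hmeas3 0 2 1 (by decide) (by decide)
    simpa using this
  have hXZ : IndepFun X₁ Z P := by
    have := hindep.indepFun (show (0 : Fin 3) ≠ 2 by decide)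
    simpa using this
  have hX₁nn := expLaw_ae_nonneg hlam₁ hX₁
  have key : ∀ ρ : ℝ, 1 ≤ ρ →
      (P {ω | A * ρ * X₂ ω < u * (B * ρ * X₁ ω + η * ρ * Z ω + 1)}).toReal
        = 1 - Real.exp (-(u / (A * ρ) / lam₂)) * (q * I) := by
    intro ρ hρ
    have hρ0 : 0 < ρ := lt_of_lt_of_le one_pos hρ
    set a : ℝ := u * B / A with hadef
    set b : ℝ := u * η / A with hbdef
    set c : ℝ := u / (A * ρ) with hcdef
    have ha : 0 < a := by rw [hadef]; positivity
    have hb : 0 < b := by rw [hbdef]; positivity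
    have hc : 0 < c := by rw [hcdef]; positivity
    set Y : Ω → ℝ := fun ω => a * X₁ ω + b * Z ω + c with hYdef
    have hYm : Measurable Y := ((hX₁m.const_mul a).add (hZmeas.const_mul b)).add_const c
    have hset : {ω | A * ρ * X₂ ω < u * (B * ρ * X₁ ω + η * ρ * Z ω + 1)}
        = {ω | X₂ ω < Y ω} := by
      ext ω
      simp only [Set.mem_setOf_eq, hYdef]
      rw [show u * (B * ρ * X₁ ω + η * ρ * Z ω + 1)
          = (A * ρ) * (a * X₁ ω + b * Z ω + c) by
        rw [hadef, hbdef, hcdef]; field_simp]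
      constructor
      · intro h
        exact lt_of_mul_lt_mul_left h (by positivity : (0:ℝ) ≤ A * ρ)
      · intro h
        exact mul_lt_mul_of_pos_left h (by positivity)
    have hIndY : IndepFun Y X₂ P := by
      have hφ : Measurable (fun p : ℝ × ℝ => a * p.1 + b * p.2 + c) :=
        ((measurable_fst.const_mul a).add (measurable_snd.const_mul b)).add_const c
      exact hprod.comp hφ measurable_id
    haveI : IsProbabilityMeasure (P.map X₂) := Measure.isProbabilityMeasure_map hX₂m.aemeasurable
    haveI : IsProbabilityMeasure (P.map Y) := Measure.isProbabilityMeasure_map hYm.aemeasurable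
    have hmapprod : P.map (fun ω => (Y ω, X₂ ω)) = (P.map Y).prod (P.map X₂) :=
      (indepFun_iff_map_prod_eq_prod_map_map hYm.aemeasurable hX₂m.aemeasurable).mp hIndY
    have hPev : P {ω | X₂ ω < Y ω} = ((P.map Y).prod (P.map X₂)) {p : ℝ × ℝ | p.2 < p.1} := by
      rw [← hmapprod,
        Measure.map_apply (hYm.prodMk hX₂m) (measurableSet_lt measurable_snd measurable_fst)]
      rfl
    have hprodeval : ((P.map Y).prod (P.map X₂)) {p : ℝ × ℝ | p.2 < p.1}
        = ∫⁻ y, ENNReal.ofReal (1 - Real.exp (-(y / lam₂))) ∂(P.map Y) := by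
      rw [Measure.prod_apply (measurableSet_lt measurable_snd measurable_fst)]
      apply lintegral_congr
      intro y
      have hpre : (Prod.mk y ⁻¹' {p : ℝ × ℝ | p.2 < p.1}) = Set.Iio y := rfl
      rw [hpre, expLaw_map_Iio hlam₂ hX₂]
    have hlm : ∫⁻ y, ENNReal.ofReal (1 - Real.exp (-(y / lam₂))) ∂(P.map Y)
        = ∫⁻ ω, ENNReal.ofReal (1 - Real.exp (-(Y ω / lam₂))) ∂P := by
      exact lintegral_map
        ((continuous_const.sub (Real.continuous_exp.comp
          ((continuous_id.div_const lam₂).neg))).measurable.ennreal_ofReal) hYm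
    have hYnn : ∀ᵐ ω ∂P, 0 ≤ Y ω := by
      filter_upwards [hX₁nn] with ω h1
      have h2 := hZnonneg ω
      simp only [hYdef]
      have := mul_nonneg ha.le h1
      have := mul_nonneg hb.le h2
      linarith
    have hgnn : 0 ≤ᵐ[P] fun ω => 1 - Real.exp (-(Y ω / lam₂)) := by
      filter_upwards [hYnn] with ω h1
      have h2 : Real.exp (-(Y ω / lam₂)) ≤ 1 :=
        Real.exp_le_one_iff.mpr (neg_nonpos.mpr (div_nonneg h1 hlam₂.le))
      simp only [Pi.zero_apply]
      linarith
    have hexpint : Integrable (fun ω => Real.exp (-(Y ω / lam₂))) P := by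
      apply integrable_exp_nonpos ((hYm.div_const lam₂).neg)
      filter_upwards [hYnn] with ω h1
      exact neg_nonpos.mpr (div_nonneg h1 hlam₂.le)
    have hgint : Integrable (fun ω => 1 - Real.exp (-(Y ω / lam₂))) P :=
      (integrable_const 1).sub hexpint
    have hreal : (∫⁻ ω, ENNReal.ofReal (1 - Real.exp (-(Y ω / lam₂))) ∂P).toReal
        = ∫ ω, (1 - Real.exp (-(Y ω / lam₂))) ∂P := by
      rw [← ofReal_integral_eq_lintegral_ofReal hgint hgnn,
        ENNReal.toReal_ofReal (integral_nonneg_of_ae hgnn)]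
    have hsplit : ∫ ω, (1 - Real.exp (-(Y ω / lam₂))) ∂P
        = 1 - ∫ ω, Real.exp (-(Y ω / lam₂)) ∂P := by
      rw [integral_sub (integrable_const 1) hexpint, integral_const]
      simp
    have hfac : (fun ω => Real.exp (-(Y ω / lam₂)))
        = fun ω => Real.exp (-(c / lam₂)) *
            (Real.exp (-((a / lam₂) * X₁ ω)) * Real.exp (-((b / lam₂) * Z ω))) := by
      funext ω
      rw [← Real.exp_add, ← Real.exp_add, hYdef]
      congr 1
      field_simp
      ring
    have hindexp : IndepFun (fun ω => Real.exp (-((a / lam₂) * X₁ ω)))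
        (fun ω => Real.exp (-((b / lam₂) * Z ω))) P := by
      have h1 : Measurable (fun x : ℝ => Real.exp (-((a / lam₂) * x))) :=
        ((measurable_id.const_mul (a / lam₂)).neg).exp
      have h2 : Measurable (fun x : ℝ => Real.exp (-((b / lam₂) * x))) :=
        ((measurable_id.const_mul (b / lam₂)).neg).exp
      exact hXZ.comp h1 h2
    have hmul : ∫ ω, (Real.exp (-((a / lam₂) * X₁ ω)) * Real.exp (-((b / lam₂) * Z ω))) ∂P
        = (∫ ω, Real.exp (-((a / lam₂) * X₁ ω)) ∂P)
            * ∫ ω, Real.exp (-((b / lam₂) * Z ω)) ∂P := by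
      apply hindexp.integral_fun_mul_eq_mul_integral
      · exact (((hX₁m.const_mul (a / lam₂)).neg).exp).aestronglyMeasurable
      · exact (((hZmeas.const_mul (b / lam₂)).neg).exp).aestronglyMeasurable
    have hE1 : ∫ ω, Real.exp (-((a / lam₂) * X₁ ω)) ∂P = q := by
      have hden : 1 + (a / lam₂) * lam₁ = (A * lam₂ + B * u * lam₁) / (A * lam₂) := by
        rw [hadef, eq_div_iff (by positivity : A * lam₂ ≠ 0)]
        field_simp
      rw [expLaw_integral_exp_neg hlam₁ (div_pos ha hlam₂) hX₁, hden, one_div_div, hq]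
    have harg : ∀ ω, -((b / lam₂) * Z ω) = -(η * u * Z ω) / (A * lam₂) := by
      intro ω
      rw [hbdef]
      ring
    have hfun2 : (fun ω => Real.exp (-((b / lam₂) * Z ω)))
        = fun ω => Real.exp (-(η * u * Z ω) / (A * lam₂)) := by
      funext ω
      rw [harg ω]
    have hE2 : ∫ ω, Real.exp (-((b / lam₂) * Z ω)) ∂P = I := by
      rw [hI, hfun2]
    rw [hset, hPev, hprodeval, hlm, hreal, hsplit, hfac, integral_const_mul, hmul, hE1, hE2]
  constructor
  · have h1 : Tendsto (fun ρ : ℝ => u / (A * ρ) / lam₂) atTop (nhds 0) := by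
      have heq : (fun ρ : ℝ => u / (A * ρ) / lam₂) = fun ρ => (u / lam₂) / (A * ρ) := by
        funext ρ; ring
      rw [heq]
      exact Tendsto.div_atTop tendsto_const_nhds (Tendsto.const_mul_atTop hA tendsto_id)
    have h2 : Tendsto (fun ρ : ℝ => Real.exp (-(u / (A * ρ) / lam₂))) atTop (nhds 1) := by
      have h1' : Tendsto (fun ρ : ℝ => -(u / (A * ρ) / lam₂)) atTop (nhds 0) := by
        simpa using h1.neg
      have := (Real.continuous_exp.tendsto 0).comp h1'
      simpa [Function.comp_def] using this
    have h3 := h2.mul_const (q * I)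
    rw [one_mul] at h3
    have h4 : Tendsto (fun ρ : ℝ => 1 - Real.exp (-(u / (A * ρ) / lam₂)) * (q * I)) atTop
        (nhds (1 - q * I)) := (tendsto_const_nhds (x := (1:ℝ))).sub h3
    apply Tendsto.congr' _ h4
    filter_upwards [eventually_ge_atTop (1 : ℝ)] with ρ hρ
    exact (key ρ hρ).symm
  · have : q * I ≤ q := by
      nlinarith
    nlinarith
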